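/- Let p be a prime with p ≡ 1 (mod 3), and let A, B ∈ ℤ satisfy 4p = A² + 27B² and A ≡ 1 (mod 3). Then the cubic exponential sum g₀ = Σ_{x=0}^{p−1} exp(2πi·x³/p) ∈ ℂ is a root of the reduced cubic period polynomial x³ − 3px − Ap; that is, g₀³ = 3p·g₀ + A·p. -/

import Mathlib

/-- Uniqueness of the normalized representation `4p = A² + 27B²` with `A ≡ 1 (mod 3)`. -/
lemma stmt17_uniqA {p : ℕ} (hp : Nat.Prime p) (h3 : p % 3 = 1) {a b c d : ℤ}
    (h1 : 4 * (p : ℤ) = a ^ 2 + 27 * b ^ 2) (h2 : 4 * (p : ℤ) = c ^ 2 + 27 * d ^ 2)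
    (ha : a % 3 = 1) (hc : c % 3 = 1) : a = c := by
  have hppos : (0:ℤ) < p := by exact_mod_cast hp.pos
  have hpdvd : (p:ℤ) ∣ 27 * ((a*d - b*c) * (a*d + b*c)) := by
    refine ⟨4 * (a^2 - c^2), ?_⟩
    linear_combination c^2 * h1 - a^2 * h2
  have hp27 : ¬ (p:ℤ) ∣ 27 := by
    intro h
    have h' : p ∣ 27 := by exact_mod_cast h
    have h'' : p ∣ 3 ^ 3 := by norm_num; exact h'
    have := (Nat.prime_dvd_prime_iff_eq hp (by norm_num)).mp (hp.dvd_of_dvd_pow h'')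
    omega
  have hpe : (p:ℤ) ∣ (a*d - b*c) * (a*d + b*c) := by
    rcases (Int.Prime.dvd_mul' (by exact_mod_cast hp) hpdvd) with h | h
    · exact absurd h hp27
    · exact h
  have h4 : 4*(p:ℤ)*(a^2 - c^2) = 0 := by
    rcases (Int.Prime.dvd_mul' (by exact_mod_cast hp) hpe) with h | h
    · have he : a*d - b*c = 0 := by
        by_contra hne
        have h1' : (p:ℤ) ≤ |a*d - b*c| := Int.le_of_dvd (abs_pos.mpr hne) ((dvd_abs _ _).mpr h)
        have h2' : (p:ℤ)^2 ≤ (a*d - b*c)^2 := by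
          calc (p:ℤ)^2 ≤ |a*d-b*c|^2 := by nlinarith
          _ = (a*d-b*c)^2 := sq_abs _
        nlinarith [sq_nonneg (a*c + 27*b*d), h1, h2]
      linear_combination a^2*h2 - c^2*h1 + 27*(a*d+b*c)*he
    · have he : a*d + b*c = 0 := by
        by_contra hne
        have h1' : (p:ℤ) ≤ |a*d + b*c| := Int.le_of_dvd (abs_pos.mpr hne) ((dvd_abs _ _).mpr h)
        have h2' : (p:ℤ)^2 ≤ (a*d + b*c)^2 := by
          calc (p:ℤ)^2 ≤ |a*d+b*c|^2 := by nlinarith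
          _ = (a*d+b*c)^2 := sq_abs _
        nlinarith [sq_nonneg (a*c - 27*b*d), h1, h2]
      linear_combination a^2*h2 - c^2*h1 + 27*(a*d-b*c)*he
  have hsq : (a - c) * (a + c) = 0 := by
    rcases mul_eq_zero.mp h4 with h | h
    · exfalso; nlinarith
    · linear_combination h
  rcases mul_eq_zero.mp hsq with h | h
  · linarith
  · omega

/-- Elements of `ℤ[ω]` for `ω` a primitive cube root of unity have the form `a + bω`. -/
lemma stmt17_adjoin_decomp {ω : ℂ} (hω2 : ω^2 = -1 - ω) {z : ℂ}
    (hz : z ∈ Algebra.adjoin ℤ {ω}) : ∃ a b : ℤ, z = a + b * ω := by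
  induction hz using Algebra.adjoin_induction with
  | mem x hx =>
      exact ⟨0, 1, by rw [Set.mem_singleton_iff.mp hx]; push_cast; ring⟩
  | algebraMap r => exact ⟨r, 0, by push_cast; simp⟩
  | add x y hx hy ihx ihy =>
      obtain ⟨a, b, rfl⟩ := ihx; obtain ⟨c, d, rfl⟩ := ihy
      exact ⟨a + c, b + d, by push_cast; ring⟩
  | mul x y hx hy ihx ihy =>
      obtain ⟨a, b, rfl⟩ := ihx; obtain ⟨c, d, rfl⟩ := ihy
      refine ⟨a*c - b*d, a*d + b*c - b*d, ?_⟩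
      push_cast
      linear_combination (b:ℂ) * (d:ℂ) * hω2

/-- Complex conjugation of a cube root of unity is its square. -/
lemma stmt17_conj_cube {z : ℂ} (hz : z ^ 3 = 1) : (starRingEnd ℂ) z = z ^ 2 := by
  have hz0 : z ≠ 0 := by
    intro h; rw [h] at hz; norm_num at hz
  have habs : ‖z‖ = 1 := by
    have h1 : ‖z‖ ^ 3 = 1 := by
      rw [← norm_pow, hz, norm_one]
    have h2 : (0:ℝ) ≤ ‖z‖ := norm_nonneg z
    have hfac : (‖z‖ - 1) * ((‖z‖)^2 + ‖z‖ + 1) = 0 := by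
      linear_combination h1
    rcases mul_eq_zero.mp hfac with h | h
    · linarith [sub_eq_zero.mp h]
    · nlinarith
  have hinv : z⁻¹ = (starRingEnd ℂ) z := Complex.inv_eq_conj habs
  rw [← hinv]
  exact inv_eq_of_mul_eq_one_right (by linear_combination hz)

/-- For a prime `p ≡ 1 (mod 3)` with `4p = A² + 27B²` and `A ≡ 1 (mod 3)`, the cubic
exponential sum `g₀ = Σ_{x=0}^{p−1} exp(2πi·x³/p)` is a root of the reduced cubic period
polynomial `x³ − 3px − Ap`. -/
theorem stmt17 (p : ℕ) (hp : Nat.Prime p) (h3 : p % 3 = 1)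
    (A B : ℤ) (hAB : 4 * (p : ℤ) = A ^ 2 + 27 * B ^ 2) (hA : A % 3 = 1)
    (g₀ : ℂ)
    (hg : g₀ = ∑ x ∈ Finset.range p,
      Complex.exp (2 * Real.pi * Complex.I * (x : ℂ) ^ 3 / (p : ℂ))) :
    g₀ ^ 3 = 3 * (p : ℂ) * g₀ + (A : ℂ) * (p : ℂ) := by
  haveI : Fact p.Prime := ⟨hp⟩
  have hp0 : p ≠ 0 := hp.ne_zero
  have hp2 : 2 ≤ p := hp.two_le
  have hp7 : 7 ≤ p := by
    rcases Nat.lt_or_ge p 7 with h | h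
    · exfalso; interval_cases p <;> first
        | exact absurd hp (by decide)
        | exact absurd h3 (by decide)
    · exact h
  have hpC : (p : ℂ) ≠ 0 := Nat.cast_ne_zero.mpr hp0
  -- the standard additive character
  set ζ : ℂ := Complex.exp (2 * Real.pi * Complex.I / p) with hζdef
  have hζ : IsPrimitiveRoot ζ p := Complex.isPrimitiveRoot_exp p hp0
  set ψ : AddChar (ZMod p) ℂ := AddChar.zmodChar p hζ.pow_eq_one with hψdef
  have hψprim : ψ.IsPrimitive := AddChar.zmodChar_primitive_of_primitive_root p hζ
  have hψne : ψ ≠ 1 := by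
    have := hψprim (a := 1) one_ne_zero
    rwa [AddChar.mulShift_one] at this
  -- a cubic character
  have hcard_units : Fintype.card (ZMod p)ˣ = p - 1 := by
    simp [ZMod.card_units_eq_totient, Nat.totient_prime hp]
  have h3dvd : 3 ∣ Fintype.card (ZMod p)ˣ := by rw [hcard_units]; omega
  haveI : Fact (Nat.Prime 3) := ⟨by norm_num⟩
  obtain ⟨u3, hu3⟩ := exists_prime_orderOf_dvd_card 3 h3dvd
  obtain ⟨e⟩ := MulChar.mulEquiv_units (ZMod p) ℂ
  set χ : MulChar (ZMod p) ℂ := e.symm u3 with hχdef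
  have hχord : orderOf χ = 3 := by
    have h := orderOf_injective e.symm.toMonoidHom e.symm.injective u3
    rw [hu3] at h
    exact h
  have hχ3 : χ ^ 3 = 1 := by rw [← hχord]; exact pow_orderOf_eq_one χ
  have hχ1 : χ ≠ 1 := by
    intro h; rw [h, orderOf_one] at hχord; omega
  have hχ2ord : orderOf (χ ^ 2) = 3 := by
    rw [orderOf_pow, hχord]; norm_num
  have hχ21 : χ ^ 2 ≠ 1 := by
    intro h; rw [h, orderOf_one] at hχ2ord; omega
  have hχ23 : (χ ^ 2) ^ 3 = 1 := by
    rw [← pow_mul, mul_comm, pow_mul, hχ3, one_pow]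
  -- χ(-1) = 1
  have hone_unit : ∀ x : ZMod p, x ≠ 0 → (1 : MulChar (ZMod p) ℂ) x = 1 := by
    intro x hx
    have hu := isUnit_iff_ne_zero.mpr hx
    have := MulChar.one_apply_coe (R' := ℂ) hu.unit
    rwa [hu.unit_spec] at this
  have hχneg : χ (-1) = 1 := by
    have hne : (-1 : ZMod p) ≠ 0 := by
      intro h
      have : (1 : ZMod p) = 0 := by linear_combination -h
      exact one_ne_zero this
    have h2 : χ (-1) ^ 2 = 1 := by
      rw [← map_pow]; norm_num
    have h3' : χ (-1) ^ 3 = 1 := by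
      rw [← MulChar.pow_apply' χ (by norm_num), hχ3]
      exact hone_unit _ hne
    rw [pow_succ, h2, one_mul] at h3'
    exact h3'
  have hχ2neg : (χ ^ 2) (-1) = 1 := by
    rw [MulChar.pow_apply' χ (by norm_num), hχneg, one_pow]
  -- Gauss and Jacobi sums
  set τ : ℂ := gaussSum χ ψ with hτdef
  set σ : ℂ := gaussSum (χ ^ 2) ψ with hσdef
  set J : ℂ := jacobiSum χ χ with hJdef
  set J2 : ℂ := jacobiSum (χ ^ 2) (χ ^ 2) with hJ2def
  have hcardF : (Fintype.card (ZMod p) : ℂ) = (p : ℂ) := by rw [ZMod.card]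
  have hIco : Finset.Ico 1 2 = {1} := rfl
  have hτ3 : τ ^ 3 = (p : ℂ) * J := by
    have h := gaussSum_pow_eq_prod_jacobiSum (χ := χ) (ψ := ψ) (by omega) hψprim
    rw [hχord] at h
    rw [show 3 - 1 = 2 from rfl, hIco, Finset.prod_singleton, pow_one, hχneg, hcardF,
      one_mul] at h
    exact h
  have hσ3 : σ ^ 3 = (p : ℂ) * J2 := by
    have h := gaussSum_pow_eq_prod_jacobiSum (χ := χ ^ 2) (ψ := ψ) (by omega) hψprim
    rw [hχ2ord] at h
    rw [show 3 - 1 = 2 from rfl, hIco, Finset.prod_singleton, pow_one, hχ2neg, hcardF,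
      one_mul] at h
    exact h
  have hτσ : τ * σ = (p : ℂ) := by
    have h := gaussSum_mul_gaussSum_pow_orderOf_sub_one hχ1 hψprim
    rw [hχord, show 3 - 1 = 2 from rfl, hχneg, hcardF, one_mul] at h
    exact h
  -- J2 is the complex conjugate of J
  have hχvals : ∀ x : ZMod p, χ x ^ 3 = 1 ∨ χ x = 0 := by
    intro x
    by_cases hx : x = 0
    · right; rw [hx]; exact MulChar.map_nonunit χ (by simp)
    · left
      rw [← MulChar.pow_apply' χ (by norm_num), hχ3]
      exact hone_unit _ hx
  have hconj : (starRingEnd ℂ) J = J2 := by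
    have hcr : χ.ringHomComp (starRingEnd ℂ) = χ ^ 2 := by
      apply MulChar.ext'
      intro a
      rcases hχvals a with h | h
      · rw [MulChar.ringHomComp_apply, MulChar.pow_apply' χ (by norm_num),
          stmt17_conj_cube h]
      · rw [MulChar.ringHomComp_apply, MulChar.pow_apply' χ (by norm_num), h]
        simp
    have hcomp := jacobiSum_ringHomComp χ χ (starRingEnd ℂ)
    rw [hcr] at hcomp
    exact hcomp.symm
  -- J * J2 = p
  have hJJ2 : J * J2 = (p : ℂ) := by
    have h1 : (p:ℂ)^2 * (J * J2) = (p:ℂ)^2 * (p:ℂ) := by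
      linear_combination (-(σ^3)) * hτ3 - (p:ℂ) * J * hσ3
        + (τ^2*σ^2 + (p:ℂ)*τ*σ + (p:ℂ)^2) * hτσ
    exact mul_left_cancel₀ (pow_ne_zero 2 hpC) h1
  -- the primitive cube root of unity in ℂ
  set ω : ℂ := Complex.exp (2 * Real.pi * Complex.I / 3) with hωdef
  have hω : IsPrimitiveRoot ω 3 := Complex.isPrimitiveRoot_exp 3 (by norm_num)
  have hω3 : ω ^ 3 = 1 := hω.pow_eq_one
  have hωne : ω ≠ 1 := hω.ne_one (by norm_num)
  have hω2 : ω ^ 2 = -1 - ω := by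
    have hfac : (ω - 1) * (ω^2 + ω + 1) = 0 := by linear_combination hω3
    rcases mul_eq_zero.mp hfac with h | h
    · exact absurd (sub_eq_zero.mp h) hωne
    · linear_combination h
  -- J = x + yω with x ≡ -1, y ≡ 0 mod 3
  obtain ⟨z, hzmem, hJz⟩ := exists_jacobiSum_eq_neg_one_add (F := ZMod p) (by norm_num)
    hχ3 hχ3 (by rw [ZMod.card]; omega) hω
  obtain ⟨s, t, rfl⟩ := stmt17_adjoin_decomp hω2 hzmem
  have hJxy : J = ((3*t - 1 : ℤ) : ℂ) + ((3*t - 3*s : ℤ) : ℂ) * ω := by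
    rw [hJdef, hJz]
    push_cast
    linear_combination ((s:ℂ) - 3*(t:ℂ) + (t:ℂ)*ω) * hω2
  have hJ2xy : J2 = (((3*t - 1) - (3*t - 3*s) : ℤ) : ℂ) - ((3*t - 3*s : ℤ) : ℂ) * ω := by
    have hconjω : (starRingEnd ℂ) ω = -1 - ω := by
      rw [stmt17_conj_cube hω3, hω2]
    rw [← hconj, hJxy, map_add, map_mul, map_intCast, map_intCast, hconjω]
    push_cast
    ring
  -- the rational integer identities
  have hint : (3*t - 1)^2 - (3*t - 1)*(3*t - 3*s) + (3*t - 3*s)^2 = (p : ℤ) := by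
    have hC : (((3*t - 1)^2 - (3*t - 1)*(3*t - 3*s) + (3*t - 3*s)^2 : ℤ) : ℂ) = (p : ℂ) := by
      push_cast
      rw [hJxy, hJ2xy] at hJJ2
      push_cast at hJJ2
      linear_combination hJJ2 + (3*(t:ℂ) - 3*(s:ℂ))^2 * hω2
    exact_mod_cast hC
  have hrep : 4 * (p : ℤ) = (3*t + 3*s - 2)^2 + 27*(t - s)^2 := by
    linear_combination (-4) * hint
  have hA0mod : (3*t + 3*s - 2) % 3 = 1 := by omega
  have hAeq : A = 3*t + 3*s - 2 := stmt17_uniqA hp h3 hAB hrep hA hA0mod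
  have hsumJ : J + J2 = (A : ℂ) := by
    rw [hJxy, hJ2xy, hAeq]
    push_cast
    ring
  -- the trivial-character Gauss sum is -1
  have hψ0 : ψ 0 = 1 := AddChar.map_zero_eq_one ψ
  have hg1 : gaussSum 1 ψ = -1 := by
    rw [gaussSum, ← Finset.add_sum_erase _ _ (Finset.mem_univ (0 : ZMod p))]
    rw [MulChar.map_nonunit _ (by simp : ¬ IsUnit (0 : ZMod p)), zero_mul, zero_add]
    have hc : ∀ x ∈ Finset.univ.erase (0 : ZMod p),
        (1 : MulChar (ZMod p) ℂ) x * ψ x = ψ x := by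
      intro x hx
      rw [hone_unit x (Finset.mem_erase.mp hx).1, one_mul]
    rw [Finset.sum_congr rfl hc]
    have htot := AddChar.sum_eq_zero_of_ne_one hψne
    rw [← Finset.add_sum_erase _ _ (Finset.mem_univ (0 : ZMod p)), hψ0] at htot
    linear_combination htot
  have hχcube : ∀ b : ZMod p, b ≠ 0 → χ b ^ 3 = 1 := by
    intro b hb
    rw [← MulChar.pow_apply' χ (by norm_num), hχ3]
    exact hone_unit _ hb
  -- cube counting: b ≠ 0 is a cube iff χ b = 1
  have hcube_iff : ∀ b : ZMod p, b ≠ 0 → ((∃ x : ZMod p, x ^ 3 = b) ↔ χ b = 1) := by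
    obtain ⟨g, hgen⟩ := IsCyclic.exists_generator (α := (ZMod p)ˣ)
    have hgne : (g : ZMod p) ≠ 0 := Units.ne_zero g
    have hχg3 : (χ ↑g) ^ 3 = 1 := hχcube _ hgne
    have hχgne : χ ↑g ≠ 1 := by
      intro hgl
      apply hχ1
      apply MulChar.ext
      intro a
      obtain ⟨k, hk0⟩ := mem_powers_iff_mem_zpowers.mpr (hgen a)
      have hk : g ^ k = a := hk0
      have l : χ ↑(g ^ k) = 1 := by
        rw [Units.val_pow_eq_pow_val, map_pow, hgl, one_pow]
      rw [← hk, l, MulChar.one_apply_coe]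
    have hordg : orderOf (χ ↑g) = 3 := by
      have hdvd := orderOf_dvd_of_pow_eq_one hχg3
      rcases (Nat.Prime.eq_one_or_self_of_dvd (by norm_num : Nat.Prime 3) _ hdvd) with h | h
      · exact absurd (orderOf_eq_one_iff.mp h) hχgne
      · exact h
    intro b hb
    constructor
    · rintro ⟨x, rfl⟩
      have hx0 : x ≠ 0 := by
        rintro rfl
        exact hb (by norm_num)
      rw [map_pow, ← MulChar.pow_apply' χ (by norm_num), hχ3]
      exact hone_unit _ hx0
    · intro h1
      have hbu : IsUnit b := isUnit_iff_ne_zero.mpr hb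
      obtain ⟨k, hk0⟩ := mem_powers_iff_mem_zpowers.mpr (hgen hbu.unit)
      have hk : g ^ k = hbu.unit := hk0
      have hχgk : (χ ↑g) ^ k = 1 := by
        rw [← map_pow, ← Units.val_pow_eq_pow_val, hk, hbu.unit_spec]
        exact h1
      have h3k : 3 ∣ k := hordg ▸ orderOf_dvd_iff_pow_eq_one.mpr hχgk
      obtain ⟨m, rfl⟩ := h3k
      refine ⟨(↑(g ^ m) : ZMod p), ?_⟩
      have hcalc : (↑(g ^ m) : ZMod p) ^ 3 = ↑(g ^ (3 * m)) := by
        rw [← Units.val_pow_eq_pow_val, ← pow_mul, mul_comm]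
      rw [hcalc, hk, hbu.unit_spec]
  -- counting cube roots
  have hμ3 : IsPrimitiveRoot ((u3 : (ZMod p)ˣ) : ZMod p) 3 := by
    have ho : orderOf ((u3 : (ZMod p)ˣ) : ZMod p) = 3 := by rw [orderOf_units, hu3]
    exact ho ▸ IsPrimitiveRoot.orderOf _
  have hcard3 : ∀ b : ZMod p, b ≠ 0 → (∃ x : ZMod p, x ^ 3 = b) →
      (Finset.univ.filter (fun x : ZMod p => x ^ 3 = b)).card = 3 := by
    intro b hb hex
    have hset : Finset.univ.filter (fun x : ZMod p => x ^ 3 = b)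
        = (Polynomial.nthRoots 3 b).toFinset := by
      ext x
      simp [Polynomial.mem_nthRoots (by norm_num : 0 < 3), Multiset.mem_toFinset]
    rw [hset, Multiset.toFinset_card_of_nodup (hμ3.nthRoots_nodup hb),
      hμ3.card_nthRoots b, if_pos hex]
  have hcard0 : ∀ b : ZMod p, ¬ (∃ x : ZMod p, x ^ 3 = b) →
      (Finset.univ.filter (fun x : ZMod p => x ^ 3 = b)).card = 0 := by
    intro b hex
    rw [Finset.card_eq_zero]
    ext x
    simp only [Finset.mem_filter, Finset.mem_univ, true_and, Finset.notMem_empty, iff_false]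
    exact fun h => hex ⟨x, h⟩
  have hcardz : (Finset.univ.filter (fun x : ZMod p => x ^ 3 = (0 : ZMod p))).card = 1 := by
    have hset : Finset.univ.filter (fun x : ZMod p => x ^ 3 = (0 : ZMod p)) = {0} := by
      ext x
      simp [pow_eq_zero_iff]
    rw [hset, Finset.card_singleton]
  -- the master counting identity
  have hkey : ∑ y : ZMod p, ψ (y ^ 3) = gaussSum 1 ψ + τ + σ + 1 := by
    rw [← Finset.sum_fiberwise Finset.univ (fun x : ZMod p => x ^ 3) (fun x => ψ (x ^ 3))]
    have hin : ∀ b : ZMod p, ∑ x ∈ Finset.univ.filter (fun x : ZMod p => x ^ 3 = b), ψ (x ^ 3)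
        = ((Finset.univ.filter (fun x : ZMod p => x ^ 3 = b)).card : ℂ) * ψ b := by
      intro b
      rw [Finset.sum_congr rfl (fun x hx => by rw [(Finset.mem_filter.mp hx).2]),
        Finset.sum_const, nsmul_eq_mul]
    rw [Finset.sum_congr rfl fun b _ => hin b]
    have hterm : ∀ b : ZMod p,
        ((Finset.univ.filter (fun x : ZMod p => x ^ 3 = b)).card : ℂ) * ψ b
        = ((1 : MulChar (ZMod p) ℂ) b * ψ b + χ b * ψ b + (χ ^ 2) b * ψ b)
          + (if b = 0 then 1 else 0) := by
      intro b
      by_cases hb : b = 0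
      · subst hb
        rw [hcardz, if_pos rfl, hψ0, MulChar.map_nonunit _ (by simp : ¬ IsUnit (0 : ZMod p)),
          MulChar.map_nonunit χ (by simp : ¬ IsUnit (0 : ZMod p)),
          MulChar.map_nonunit (χ^2) (by simp : ¬ IsUnit (0 : ZMod p))]
        norm_num
      · rw [if_neg hb, MulChar.pow_apply' χ (by norm_num), hone_unit b hb]
        by_cases hex : ∃ x : ZMod p, x ^ 3 = b
        · rw [hcard3 b hb hex, (hcube_iff b hb).mp hex]
          push_cast
          ring
        · rw [hcard0 b hex]
          have hcne : χ b ≠ 1 := fun h => hex ((hcube_iff b hb).mpr h)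
          have hc3 : χ b ^ 3 = 1 := hχcube b hb
          have hsum0 : 1 + χ b + χ b ^ 2 = 0 := by
            have hfac : (χ b - 1) * (χ b ^ 2 + χ b + 1) = 0 := by linear_combination hc3
            rcases mul_eq_zero.mp hfac with h | h
            · exact absurd (sub_eq_zero.mp h) hcne
            · linear_combination h
          push_cast
          linear_combination (-(ψ b)) * hsum0
    rw [Finset.sum_congr rfl fun b _ => hterm b]
    rw [Finset.sum_add_distrib, Finset.sum_add_distrib, Finset.sum_add_distrib]
    have e1 : ∑ b : ZMod p, (1 : MulChar (ZMod p) ℂ) b * ψ b = gaussSum 1 ψ := rfl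
    have e2 : ∑ b : ZMod p, χ b * ψ b = τ := rfl
    have e3 : ∑ b : ZMod p, (χ ^ 2) b * ψ b = σ := rfl
    rw [e1, e2, e3]
    norm_num
  -- g₀ as a character sum
  have hgsum : g₀ = ∑ y : ZMod p, ψ (y ^ 3) := by
    rw [hg]
    have hterm : ∀ x : ℕ,
        Complex.exp (2 * Real.pi * Complex.I * (x : ℂ) ^ 3 / p) = ζ ^ (x ^ 3) := by
      intro x
      rw [hζdef, ← Complex.exp_nat_mul]
      congr 1
      push_cast
      ring
    rw [Finset.sum_congr rfl fun x _ => hterm x]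
    refine Finset.sum_nbij' (fun x : ℕ => (x : ZMod p)) (fun y : ZMod p => y.val)
      ?_ ?_ ?_ ?_ ?_
    · intro a _; exact Finset.mem_univ _
    · intro a _; exact Finset.mem_range.mpr (ZMod.val_lt a)
    · intro a ha; exact ZMod.val_cast_of_lt (Finset.mem_range.mp ha)
    · intro a _; exact ZMod.natCast_rightInverse a
    · intro a _
      have hcast : ((a : ZMod p)) ^ 3 = ((a ^ 3 : ℕ) : ZMod p) := by push_cast; ring
      rw [hcast, hψdef, AddChar.zmodChar_apply']
  have hg0τσ : g₀ = τ + σ := by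
    rw [hgsum, hkey, hg1]; ring
  rw [hg0τσ]
  linear_combination hτ3 + hσ3 + 3*(τ+σ)*hτσ + (p:ℂ) * hsumJ
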